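/- arXiv:2308.04676 — 4 statements merged into one kernel-verified Lean document; each statement's English description precedes it below -/
import Mathlib

section
/- Let q ≥ 2, m ≥ 2 and r < m be positive integers, let h be a bijection from {1,…,r} onto a subset S₂ ⊆ {1,…,m} with smallest element h(u), and fix digits a_l ∈ {1,…,q-1} for l ∈ {1,…,r}\{u}. If an integer i satisfies i ≤ Σ_{l≠u} a_l q^{h(l)-1} + q^{h(u)} - 1 and its q-ary digits satisfy i_{h(l)} = a_l for all l ∈ {1,…,r}\{u}, then i_s = 0 for every index s with h(u)+1 ≤ s ≤ m-1 and s ∉ {h(l) : l ∈ {1,…,r}\{u}}. -/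
open Finset

/-- The `k`-th `q`-ary digit (1-indexed) of the natural number `i`. -/
def dig (q i k : ℕ) : ℕ := i / q ^ (k - 1) % q

lemma mod_mul_decomp (n a b : ℕ) : n % (a * b) = a * (n / a % b) + n % a := by
  conv_lhs => rw [← Nat.div_add_mod (n % (a * b)) a]
  rw [Nat.mod_mul_right_div_self, Nat.mod_mul_right_mod]

lemma digsum (q : ℕ) (hq : 2 ≤ q) (m : ℕ) (i : ℕ) :
    ∑ k ∈ Icc 1 m, dig q i k * q ^ (k - 1) = i % q ^ m := by
  induction m with
  | zero => simp [Nat.mod_one]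
  | succ m ih =>
    rw [Finset.sum_Icc_succ_top (by omega : 1 ≤ m + 1), ih, pow_succ, mod_mul_decomp]
    simp only [dig, Nat.add_sub_cancel]
    ring

lemma geom_bound (q : ℕ) (hq : 2 ≤ q) (a b : ℕ) :
    ∑ e ∈ Icc a b, (q - 1) * q ^ e ≤ q ^ (b + 1) - q ^ a := by
  induction b with
  | zero =>
    rcases Nat.eq_zero_or_pos a with rfl | ha
    · simp
    · rw [Finset.Icc_eq_empty (by omega)]; simp
  | succ b ih =>
    rcases le_or_gt a (b + 1) with hab | hab
    · rw [Finset.sum_Icc_succ_top hab]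
      have h1 : q ^ a ≤ q ^ (b + 1) := Nat.pow_le_pow_right (by omega) hab
      have h2 : (q - 1) * q ^ (b + 1) + q ^ (b + 1) = q ^ (b + 1 + 1) := by
        have hp : q - 1 + 1 = q := by omega
        calc (q - 1) * q ^ (b + 1) + q ^ (b + 1) = (q - 1 + 1) * q ^ (b + 1) := by
              ring
          _ = q * q ^ (b + 1) := by rw [hp]
          _ = q ^ (b + 1 + 1) := by ring
      omega
    · rw [Finset.Icc_eq_empty (by omega)]; simp

theorem stmt2 (q m r : ℕ) (hq : 2 ≤ q) (hm : 2 ≤ m) (hr : 1 ≤ r) (hrm : r < m)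
    (h : ℕ → ℕ) (u : ℕ) (hu : u ∈ Finset.Icc 1 r)
    (hinj : ∀ l ∈ Finset.Icc 1 r, ∀ l' ∈ Finset.Icc 1 r, h l = h l' → l = l')
    (hrange : ∀ l ∈ Finset.Icc 1 r, h l ∈ Finset.Icc 1 m)
    (hmin : ∀ l ∈ Finset.Icc 1 r, h u ≤ h l)
    (a : ℕ → ℕ) (ha : ∀ l ∈ (Finset.Icc 1 r).erase u, a l ∈ Finset.Icc 1 (q - 1))
    (i : ℕ) (him : i < q ^ m)
    (hi2 : i ≤ ∑ l ∈ (Finset.Icc 1 r).erase u, a l * q ^ (h l - 1) + q ^ (h u) - 1)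
    (hdig : ∀ l ∈ (Finset.Icc 1 r).erase u, dig q i (h l) = a l)
    (s : ℕ) (hs1 : h u + 1 ≤ s) (hs2 : s ≤ m - 1)
    (hs3 : ∀ l ∈ (Finset.Icc 1 r).erase u, s ≠ h l) :
    dig q i s = 0 := by
  have hu1 : 1 ≤ h u := (Finset.mem_Icc.mp (hrange u hu)).1
  set F := (Finset.Icc 1 r).erase u with hF
  -- every l in F has h u < h l
  have hlt : ∀ l ∈ F, h u < h l := by
    intro l hl
    have hl' : l ∈ Finset.Icc 1 r := Finset.mem_of_mem_erase hl
    have := hmin l hl'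
    rcases lt_or_eq_of_le this with h1 | h1
    · exact h1
    · exact absurd (hinj u hu l hl' h1) (Ne.symm (Finset.ne_of_mem_erase hl))
  set B := ∑ l ∈ F, a l * q ^ (h l - 1) with hB
  -- Step 1: B ≤ i
  have hBi : B ≤ i := by
    have hdecomp : ∑ k ∈ Icc 1 m, dig q i k * q ^ (k - 1) = i := by
      rw [digsum q hq m i, Nat.mod_eq_of_lt him]
    have hinjF : Set.InjOn h F := by
      intro x hx y hy hxy
      exact hinj x (Finset.mem_of_mem_erase hx) y (Finset.mem_of_mem_erase hy) hxy
    have hBeq : B = ∑ k ∈ F.image h, dig q i k * q ^ (k - 1) := by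
      rw [Finset.sum_image (fun x hx y hy => hinjF hx hy)]
      exact Finset.sum_congr rfl fun l hl => by rw [hdig l hl]
    have hsub : F.image h ⊆ Icc 1 m := by
      intro k hk
      obtain ⟨l, hl, rfl⟩ := Finset.mem_image.mp hk
      exact hrange l (Finset.mem_of_mem_erase hl)
    calc B = ∑ k ∈ F.image h, dig q i k * q ^ (k - 1) := hBeq
      _ ≤ ∑ k ∈ Icc 1 m, dig q i k * q ^ (k - 1) :=
          Finset.sum_le_sum_of_subset hsub
      _ = i := hdecomp
  -- Step 2: j := i - B < q ^ (h u)
  have hqhu : 1 ≤ q ^ (h u) := Nat.one_le_pow _ _ (by omega)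
  have hj : i - B < q ^ (h u) := by omega
  -- Step 3: split F
  set F1 := F.filter (fun l => h l < s) with hF1
  set F2 := F.filter (fun l => ¬ h l < s) with hF2
  have hsplit : B = ∑ l ∈ F1, a l * q ^ (h l - 1) + ∑ l ∈ F2, a l * q ^ (h l - 1) := by
    rw [hB, ← Finset.sum_filter_add_sum_filter_not F (fun l => h l < s)]
  -- Step 4: B1 + (i - B) < q ^ (s - 1)
  have hB1 : ∑ l ∈ F1, a l * q ^ (h l - 1) ≤ q ^ (s - 1) - q ^ (h u) := by
    have hinj1 : Set.InjOn (fun l => h l - 1) F1 := by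
      intro x hx y hy hxy
      have hx' := Finset.mem_of_mem_erase (Finset.mem_filter.mp hx).1
      have hy' := Finset.mem_of_mem_erase (Finset.mem_filter.mp hy).1
      have hx1 : 1 ≤ h x := (Finset.mem_Icc.mp (hrange x hx')).1
      have hy1 : 1 ≤ h y := (Finset.mem_Icc.mp (hrange y hy')).1
      exact hinj x hx' y hy' (by simp at hxy; omega)
    have hle : ∑ l ∈ F1, a l * q ^ (h l - 1)
        ≤ ∑ l ∈ F1, (q - 1) * q ^ (h l - 1) := by
      apply Finset.sum_le_sum
      intro l hl
      have := ha l (Finset.mem_filter.mp hl).1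
      simp only [Finset.mem_Icc] at this
      exact Nat.mul_le_mul_right _ this.2
    have himg : ∑ l ∈ F1, (q - 1) * q ^ (h l - 1)
        = ∑ e ∈ F1.image (fun l => h l - 1), (q - 1) * q ^ e := by
      rw [Finset.sum_image (fun x hx y hy => hinj1 hx hy)]
    have hsub : F1.image (fun l => h l - 1) ⊆ Icc (h u) (s - 2) := by
      intro e he
      obtain ⟨l, hl, rfl⟩ := Finset.mem_image.mp he
      have hmem := Finset.mem_filter.mp hl
      have h1 := hlt l hmem.1
      have h2 := hmem.2
      simp only [Finset.mem_Icc]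
      omega
    have hbound : ∑ e ∈ F1.image (fun l => h l - 1), (q - 1) * q ^ e
        ≤ ∑ e ∈ Icc (h u) (s - 2), (q - 1) * q ^ e :=
      Finset.sum_le_sum_of_subset hsub
    have hgeo : ∑ e ∈ Icc (h u) (s - 2), (q - 1) * q ^ e
        ≤ q ^ (s - 1) - q ^ (h u) := by
      have hg := geom_bound q hq (h u) (s - 2)
      have hs21 : s - 2 + 1 = s - 1 := by omega
      rwa [hs21] at hg
    exact le_trans hle (le_trans (le_of_eq himg) (le_trans hbound hgeo))
  have hw : ∑ l ∈ F1, a l * q ^ (h l - 1) + (i - B) < q ^ (s - 1) := by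
    have : q ^ (h u) ≤ q ^ (s - 1) := Nat.pow_le_pow_right (by omega) (by omega)
    omega
  -- Step 5: B2 = q^(s-1) * (q * D)
  have hB2 : ∑ l ∈ F2, a l * q ^ (h l - 1)
      = q ^ (s - 1) * (q * ∑ l ∈ F2, a l * q ^ (h l - 1 - s)) := by
    rw [Finset.mul_sum, Finset.mul_sum]
    apply Finset.sum_congr rfl
    intro l hl
    have hmem := Finset.mem_filter.mp hl
    have hls : s < h l := by
      have h1 : ¬ h l < s := hmem.2
      have h2 := hs3 l hmem.1
      omega
    have : q ^ (h l - 1) = q ^ (s - 1) * (q * q ^ (h l - 1 - s)) := by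
      rw [← pow_succ', ← pow_add]
      congr 1
      omega
    rw [this]; ring
  -- conclude
  have hi_eq : i = q ^ (s - 1) * (q * ∑ l ∈ F2, a l * q ^ (h l - 1 - s))
      + (∑ l ∈ F1, a l * q ^ (h l - 1) + (i - B)) := by
    rw [← hB2]
    omega
  have hqs : 0 < q ^ (s - 1) := Nat.pow_pos (by omega)
  unfold dig
  rw [hi_eq, Nat.mul_add_div hqs, Nat.div_eq_of_lt hw, Nat.add_zero,
    Nat.mul_mod_right]
end

section
/- Let q ≥ 2, and let f, g be length-L ℤ_q-valued sequences that decompose into q^v blocks of equal length ℓ = L/q^v as f = g₀ | (g₀ ⊕ u₁) | ⋯ | (g₀ ⊕ u_{q^v-1}) and g = h₀ | (h₀ ⊕ w₁) | ⋯ | (h₀ ⊕ w_{q^v-1}), where u_k, w_k ∈ ℤ_q are constants added to every entry modulo q. Then for any 0 < τ < ℓ, the aperiodic cross-correlation satisfies R_{f,g}(τ) = (1 + Σ_{k=1}^{q^v-1} ξ^{u_k - w_k}) · R_{g₀,h₀}(τ) + (ξ^{-w_1} + Σ_{k=1}^{q^v-2} ξ^{u_k - w_{k+1}}) · conjugate(R_{h₀,g₀}(ℓ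 - τ)). -/
open Finset Complex

/-- The primitive `q`-th root of unity `ξ = e^{2πi/q}`. -/
noncomputable def xiq (q : ℕ) : ℂ := Complex.exp (2 * Real.pi * Complex.I / q)

/-- The complex value `ξ^x` attached to `x ∈ ℤ_q`. -/
noncomputable def ec (q : ℕ) (x : ZMod q) : ℂ := xiq q ^ x.val

/-- Aperiodic cross-correlation of two length-`len` `ℤ_q`-valued sequences at shift `τ`. -/
noncomputable def Rq (q len : ℕ) (a b : ℕ → ZMod q) (τ : ℤ) : ℂ :=
  if 0 ≤ τ then ∑ i ∈ Finset.range (len - τ.toNat), ec q (a i - b (i + τ.toNat))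
  else ∑ i ∈ Finset.range (len - (-τ).toNat), ec q (a (i + (-τ).toNat) - b i)

lemma xiq_pow_q {q : ℕ} (hq : q ≠ 0) : xiq q ^ q = 1 := by
  have hq' : (q : ℂ) ≠ 0 := Nat.cast_ne_zero.mpr hq
  rw [xiq, ← Complex.exp_nat_mul]
  rw [show (q : ℂ) * (2 * Real.pi * Complex.I / q) = 2 * Real.pi * Complex.I by
    field_simp]
  exact Complex.exp_two_pi_mul_I

lemma ec_add {q : ℕ} (hq : q ≠ 0) (x y : ZMod q) : ec q (x + y) = ec q x * ec q y := by
  haveI : NeZero q := ⟨hq⟩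
  rw [ec, ec, ec, ZMod.val_add, ← pow_add]
  conv_rhs => rw [← Nat.div_add_mod (ZMod.val x + ZMod.val y) q, pow_add, pow_mul,
    xiq_pow_q hq, one_pow, one_mul]

lemma ec_zero {q : ℕ} (hq : q ≠ 0) : ec q 0 = 1 := by
  haveI : NeZero q := ⟨hq⟩
  rw [ec, ZMod.val_zero, pow_zero]

lemma ec_neg {q : ℕ} (hq : q ≠ 0) (x : ZMod q) : ec q (-x) = (ec q x)⁻¹ := by
  have h : ec q x * ec q (-x) = 1 := by rw [← ec_add hq, add_neg_cancel, ec_zero hq]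
  exact (inv_eq_of_mul_eq_one_right h).symm

lemma conj_xiq (q : ℕ) : (starRingEnd ℂ) (xiq q) = (xiq q)⁻¹ := by
  rw [xiq, ← Complex.exp_conj, ← Complex.exp_neg]
  congr 1
  simp [map_div₀, Complex.conj_I, map_ofNat]
  ring

lemma conj_ec {q : ℕ} (hq : q ≠ 0) (x : ZMod q) :
    (starRingEnd ℂ) (ec q x) = ec q (-x) := by
  rw [ec, map_pow, conj_xiq, inv_pow, ← ec, ec_neg hq]

theorem stmt9 (q v ℓ : ℕ) (hq : 2 ≤ q) (hℓ : 1 ≤ ℓ) (hv : 1 ≤ v)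
    (g0 h0 : ℕ → ZMod q) (u w : ℕ → ZMod q) (hu0 : u 0 = 0) (hw0 : w 0 = 0)
    (f g : ℕ → ZMod q)
    (hf : ∀ i < q ^ v * ℓ, f i = g0 (i % ℓ) + u (i / ℓ))
    (hg : ∀ i < q ^ v * ℓ, g i = h0 (i % ℓ) + w (i / ℓ))
    (τ : ℕ) (hτ1 : 0 < τ) (hτ2 : τ < ℓ) :
    Rq q (q ^ v * ℓ) f g (τ : ℤ) =
      (1 + ∑ k ∈ Finset.Icc 1 (q ^ v - 1), ec q (u k - w k)) * Rq q ℓ g0 h0 (τ : ℤ) +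
      (ec q (-(w 1)) + ∑ k ∈ Finset.Icc 1 (q ^ v - 2), ec q (u k - w (k + 1))) *
        (starRingEnd ℂ) (Rq q ℓ h0 g0 ((ℓ - τ : ℕ) : ℤ)) := by
  have hq0 : q ≠ 0 := by omega
  set Q := q ^ v with hQdef
  have hQ2 : 2 ≤ Q := le_trans hq (Nat.le_self_pow (by omega) q)
  have hℓQ : ℓ ≤ Q * ℓ := Nat.le_mul_of_pos_left ℓ (by omega)
  have hQℓ : Q * ℓ = (Q - 1) * ℓ + ℓ := by rw [Nat.sub_one_mul]; omega
  -- pointwise block values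
  have hfk : ∀ k r, k < Q → r < ℓ → f (k * ℓ + r) = g0 r + u k := by
    intro k r hk hr
    have hlt : k * ℓ + r < Q * ℓ := by
      calc k * ℓ + r < k * ℓ + ℓ := by omega
        _ = (k + 1) * ℓ := by ring
        _ ≤ Q * ℓ := Nat.mul_le_mul_right _ (by omega)
    have h1 : (k * ℓ + r) % ℓ = r := by
      rw [Nat.mul_comm, Nat.mul_add_mod, Nat.mod_eq_of_lt hr]
    have h2 : (k * ℓ + r) / ℓ = k := by
      rw [Nat.mul_comm, Nat.mul_add_div (by omega), Nat.div_eq_of_lt hr, Nat.add_zero]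
    rw [hf _ hlt, h1, h2]
  have hgk : ∀ k r, k < Q → r < ℓ → g (k * ℓ + r) = h0 r + w k := by
    intro k r hk hr
    have hlt : k * ℓ + r < Q * ℓ := by
      calc k * ℓ + r < k * ℓ + ℓ := by omega
        _ = (k + 1) * ℓ := by ring
        _ ≤ Q * ℓ := Nat.mul_le_mul_right _ (by omega)
    have h1 : (k * ℓ + r) % ℓ = r := by
      rw [Nat.mul_comm, Nat.mul_add_mod, Nat.mod_eq_of_lt hr]
    have h2 : (k * ℓ + r) / ℓ = k := by
      rw [Nat.mul_comm, Nat.mul_add_div (by omega), Nat.div_eq_of_lt hr, Nat.add_zero]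
    rw [hg _ hlt, h1, h2]
  set FF : ℕ → ℂ := fun i => ec q (f i - g (i + τ)) with hFF
  set R1 : ℂ := ∑ r ∈ range (ℓ - τ), ec q (g0 r - h0 (r + τ)) with hR1
  set C : ℂ := ∑ j ∈ range τ, ec q (g0 ((ℓ - τ) + j) - h0 j) with hC
  -- block sums
  have hA : ∀ k < Q, ∑ r ∈ range (ℓ - τ), FF (k * ℓ + r) = ec q (u k - w k) * R1 := by
    intro k hk
    rw [hR1, Finset.mul_sum]
    apply Finset.sum_congr rfl
    intro r hr
    have hr' : r < ℓ - τ := Finset.mem_range.mp hr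
    show ec q (f (k * ℓ + r) - g (k * ℓ + r + τ)) = _
    rw [hfk k r hk (by omega), show k * ℓ + r + τ = k * ℓ + (r + τ) by omega,
      hgk k (r + τ) hk (by omega), ← ec_add hq0]
    congr 1
    ring
  have hB : ∀ k < Q - 1, ∑ j ∈ range τ, FF (k * ℓ + ((ℓ - τ) + j)) =
      ec q (u k - w (k + 1)) * C := by
    intro k hk
    rw [hC, Finset.mul_sum]
    apply Finset.sum_congr rfl
    intro j hj
    have hj' : j < τ := Finset.mem_range.mp hj
    show ec q (f (k * ℓ + ((ℓ - τ) + j)) - g (k * ℓ + ((ℓ - τ) + j) + τ)) = _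
    rw [hfk k ((ℓ - τ) + j) (by omega) (by omega),
      show k * ℓ + ((ℓ - τ) + j) + τ = (k + 1) * ℓ + j by rw [Nat.add_mul]; omega,
      hgk (k + 1) j (by omega) (by omega), ← ec_add hq0]
    congr 1
    ring
  -- split of a full block
  have split : ∀ k, ∑ r ∈ range ℓ, FF (k * ℓ + r) =
      (∑ r ∈ range (ℓ - τ), FF (k * ℓ + r)) + ∑ j ∈ range τ, FF (k * ℓ + ((ℓ - τ) + j)) := by
    intro k
    have h := Finset.sum_range_add (fun r => FF (k * ℓ + r)) (ℓ - τ) τ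
    rw [show (ℓ - τ) + τ = ℓ by omega] at h
    exact h
  -- sum over blocks
  have blocks : ∀ n : ℕ, ∑ i ∈ range (n * ℓ), FF i =
      ∑ k ∈ range n, ∑ r ∈ range ℓ, FF (k * ℓ + r) := by
    intro n
    induction n with
    | zero => simp
    | succ n ih =>
      rw [Nat.succ_mul, Finset.sum_range_add, ih, Finset.sum_range_succ]
  -- unfold LHS
  have lhs_eq : Rq q (Q * ℓ) f g (τ : ℤ) =
      (∑ i ∈ range ((Q - 1) * ℓ), FF i) + ∑ r ∈ range (ℓ - τ), FF ((Q - 1) * ℓ + r) := by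
    rw [Rq, if_pos (by exact_mod_cast Nat.zero_le τ)]
    simp only [Int.toNat_natCast]
    rw [show Q * ℓ - τ = (Q - 1) * ℓ + (ℓ - τ) by omega]
    exact Finset.sum_range_add FF ((Q - 1) * ℓ) (ℓ - τ)
  -- coefficients
  have coeff1 : ∑ k ∈ range Q, ec q (u k - w k) =
      1 + ∑ k ∈ Finset.Icc 1 (Q - 1), ec q (u k - w k) := by
    rw [range_eq_Ico, Finset.sum_eq_sum_Ico_succ_bot (by omega : 0 < Q),
      hu0, hw0, sub_zero, ec_zero hq0]
    congr 1
  have coeff2 : ∑ k ∈ range (Q - 1), ec q (u k - w (k + 1)) =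
      ec q (-(w 1)) + ∑ k ∈ Finset.Icc 1 (Q - 2), ec q (u k - w (k + 1)) := by
    rw [range_eq_Ico, Finset.sum_eq_sum_Ico_succ_bot (by omega : 0 < Q - 1),
      hu0, zero_sub]
    congr 1
  -- conj part
  have hconj : (starRingEnd ℂ) (Rq q ℓ h0 g0 ((ℓ - τ : ℕ) : ℤ)) = C := by
    rw [Rq, if_pos (by exact_mod_cast Nat.zero_le (ℓ - τ))]
    simp only [Int.toNat_natCast]
    rw [show ℓ - (ℓ - τ) = τ by omega, map_sum, hC]
    apply Finset.sum_congr rfl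
    intro j hj
    rw [conj_ec hq0, neg_sub, Nat.add_comm j (ℓ - τ)]
  have hR1' : Rq q ℓ g0 h0 (τ : ℤ) = R1 := by
    rw [Rq, if_pos (by exact_mod_cast Nat.zero_le τ)]
    simp only [Int.toNat_natCast]
    exact hR1.symm
  -- assemble
  rw [lhs_eq, blocks (Q - 1), hconj, hR1', ← coeff1, ← coeff2,
    hA (Q - 1) (by omega)]
  have step : ∑ k ∈ range (Q - 1), ∑ r ∈ range ℓ, FF (k * ℓ + r) =
      (∑ k ∈ range (Q - 1), ec q (u k - w k) * R1) +
      ∑ k ∈ range (Q - 1), ec q (u k - w (k + 1)) * C := by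
    rw [← Finset.sum_add_distrib]
    apply Finset.sum_congr rfl
    intro k hk
    have hk' : k < Q - 1 := Finset.mem_range.mp hk
    rw [split k, hA k (by omega), hB k hk']
  rw [step]
  have hsucc : ∑ k ∈ range Q, ec q (u k - w k) =
      ∑ k ∈ range (Q - 1), ec q (u k - w k) + ec q (u (Q - 1) - w (Q - 1)) := by
    conv_lhs => rw [show Q = (Q - 1) + 1 by omega]
    exact Finset.sum_range_succ _ _
  rw [hsucc, add_mul, Finset.sum_mul, Finset.sum_mul]
  ring
end

section
/- Let q ≥ 2 and L = a_m q^{m-1} + Σ_{k=1}^{v-1} a_k q^{m-v+k-1} + q^u where a_m ∈ {1,…,q-1}, a_k ∈ {0,…,q-1}, and u < m - v. Suppose i < L has q-ary digits satisfying i_m = a_m and i_{m-v+k} = a_k for all k = 1,…,v-1 with every a_k ≠ 0. Then i_s = 0 for all s with u+1 ≤ s ≤ m-v-1, and hence i ≤ a_m q^{m-1} + Σ_{k=1}^{v-1} a_k q^{m-v+k-1} + q^u - 1; moreover any integer i^{(t)} obtained from i by modifying a single q-ary digit in a position ≤ u (adding t mod q) still satisfies i^{(t)} < L. -/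
open Finset

/-- The natural number obtained from `i` by replacing its `k`-th `q`-ary digit `d`
by `(d + t) mod q`, all other digits unchanged. -/
def modifyDigit (q i k t : ℕ) : ℕ :=
  i - dig q i k * q ^ (k - 1) + (dig q i k + t) % q * q ^ (k - 1)

lemma pow_mul_q (q : ℕ) (hq : 2 ≤ q) (n : ℕ) :
    q ^ n * q = q ^ n + (q - 1) * q ^ n := by
  obtain ⟨w, rfl⟩ : ∃ w, q = w + 2 := ⟨q - 2, by omega⟩
  show (w + 2) ^ n * (w + 2) = (w + 2) ^ n + (w + 2 - 1) * (w + 2) ^ n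
  have h : w + 2 - 1 = w + 1 := rfl
  rw [h]; ring

lemma sum_Icc_one (f : ℕ → ℕ) (n : ℕ) :
    ∑ k ∈ Finset.Icc 1 n, f k = ∑ t ∈ Finset.range n, f (1 + t) := by
  rw [← Finset.Ico_add_one_right_eq_Icc, Finset.sum_Ico_eq_sum_range]
  simp

/-- Base-`q` digit reconstruction for `n < q ^ w`. -/
lemma sum_digits_eq (q : ℕ) (hq : 2 ≤ q) :
    ∀ w n, n < q ^ w → ∑ j ∈ Finset.range w, n / q ^ j % q * q ^ j = n := by
  intro w
  induction w with
  | zero => intro n h; simp at h; simp [h]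
  | succ w ih =>
    intro n h
    have hq0 : 0 < q := by omega
    have hdiv : n / q < q ^ w := by
      rw [Nat.div_lt_iff_lt_mul hq0]
      calc n < q ^ (w + 1) := h
        _ = q ^ w * q := by ring
    have hih := ih (n / q) hdiv
    rw [Finset.sum_range_succ']
    have hrw : ∀ j : ℕ, n / q ^ (j + 1) % q * q ^ (j + 1)
        = (n / q) / q ^ j % q * q ^ j * q := by
      intro j
      rw [show q ^ (j + 1) = q * q ^ j from pow_succ' q j, ← Nat.div_div_eq_div_mul]
      ring
    simp only [hrw]
    rw [← Finset.sum_mul, hih]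
    simp only [pow_zero, Nat.div_one, mul_one]
    exact Nat.div_add_mod' n q

lemma geo_sum (q : ℕ) (hq : 2 ≤ q) :
    ∀ n, (q - 1) * ∑ t ∈ Finset.range n, q ^ t = q ^ n - 1 := by
  intro n
  induction n with
  | zero => simp
  | succ n ih =>
    rw [Finset.sum_range_succ, Nat.mul_add, ih, pow_succ]
    have h1 : 1 ≤ q ^ n := Nat.one_le_pow _ _ (by omega)
    have h2 := pow_mul_q q hq n
    omega

theorem stmt13 (q m v u : ℕ) (hq : 2 ≤ q) (hv : 1 ≤ v) (hvm : v < m) (hu : u < m - v)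
    (am : ℕ) (ham : am ∈ Finset.Icc 1 (q - 1))
    (a : ℕ → ℕ) (ha : ∀ k ∈ Finset.Icc 1 (v - 1), a k ∈ Finset.Icc 1 (q - 1))
    (i : ℕ)
    (hiL : i < am * q ^ (m - 1) +
      (∑ k ∈ Finset.Icc 1 (v - 1), a k * q ^ (m - v + k - 1)) + q ^ u)
    (him : dig q i m = am)
    (hik : ∀ k ∈ Finset.Icc 1 (v - 1), dig q i (m - v + k) = a k) :
    (∀ s, u + 1 ≤ s → s ≤ m - v - 1 → dig q i s = 0) ∧
    i ≤ am * q ^ (m - 1) +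
      (∑ k ∈ Finset.Icc 1 (v - 1), a k * q ^ (m - v + k - 1)) + q ^ u - 1 ∧
    (∀ k', 1 ≤ k' → k' ≤ u → ∀ t < q,
      modifyDigit q i k' t < am * q ^ (m - 1) +
        (∑ k ∈ Finset.Icc 1 (v - 1), a k * q ^ (m - v + k - 1)) + q ^ u) := by
  have hq0 : 0 < q := by omega
  obtain ⟨v', rfl⟩ : ∃ v', v = v' + 1 := ⟨v - 1, by omega⟩
  set M := m - (v' + 1) with hM
  have hMpos : 1 ≤ M := by omega
  have hm : m = M + v' + 1 := by omega
  simp only [Nat.add_sub_cancel] at *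
  set S := ∑ k ∈ Finset.Icc 1 v', a k * q ^ (m - (v' + 1) + k - 1) with hS
  set c : ℕ := am * q ^ v' + ∑ k ∈ Finset.Icc 1 v', a k * q ^ (k - 1) with hc
  -- B = c * q ^ M equals the high part
  have hBeq : c * q ^ M = am * q ^ (m - 1) + S := by
    rw [hc, add_mul, Finset.sum_mul]
    congr 1
    · rw [mul_assoc, ← pow_add]; congr 2; omega
    · apply Finset.sum_congr rfl
      intro k hk
      simp only [Finset.mem_Icc] at hk
      rw [mul_assoc, ← pow_add]
      congr 2
      omega
  -- bound on c
  have hcb : c ≤ q ^ (v' + 1) - 1 := by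
    have hamb : am ≤ q - 1 := by simp [Finset.mem_Icc] at ham; omega
    have hsum : (∑ k ∈ Finset.Icc 1 v', a k * q ^ (k - 1)) ≤ q ^ v' - 1 := by
      calc (∑ k ∈ Finset.Icc 1 v', a k * q ^ (k - 1))
          ≤ ∑ k ∈ Finset.Icc 1 v', (q - 1) * q ^ (k - 1) := by
            apply Finset.sum_le_sum
            intro k hk
            have := ha k hk
            simp [Finset.mem_Icc] at this
            exact Nat.mul_le_mul_right _ (by omega)
        _ = (q - 1) * ∑ t ∈ Finset.range v', q ^ t := by
            rw [Finset.mul_sum, sum_Icc_one (fun k => (q - 1) * q ^ (k - 1))]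
            apply Finset.sum_congr rfl
            intro t _
            simp
        _ = q ^ v' - 1 := geo_sum q hq v'
    have h1 : 1 ≤ q ^ v' := Nat.one_le_pow _ _ hq0
    have hmul : am * q ^ v' ≤ (q - 1) * q ^ v' := Nat.mul_le_mul_right _ hamb
    have h2 := pow_mul_q q hq v'
    rw [hc, pow_succ]
    omega
  -- i < q ^ m
  have hiLc : i < c * q ^ M + q ^ u := by rw [hBeq]; omega
  have hum : q ^ u ≤ q ^ M := Nat.pow_le_pow_right hq0 (by omega)
  have him' : i < q ^ m := by
    have h1 : c * q ^ M ≤ (q ^ (v' + 1) - 1) * q ^ M := Nat.mul_le_mul_right _ hcb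
    have h2 : (q ^ (v' + 1) - 1) * q ^ M = q ^ (v' + 1) * q ^ M - 1 * q ^ M :=
      Nat.sub_mul _ _ _
    have h3 : q ^ M ≤ q ^ (v' + 1) * q ^ M :=
      Nat.le_mul_of_pos_left _ (Nat.pow_pos hq0)
    have h4 : q ^ (v' + 1) * q ^ M = q ^ m := by rw [← pow_add]; congr 1; omega
    have h5 : 0 < q ^ M := Nat.pow_pos hq0
    omega
  -- the top digits of i form exactly c
  have hdd : ∀ t : ℕ, i / q ^ M / q ^ t = i / q ^ (M + t) := by
    intro t; rw [Nat.div_div_eq_div_mul, ← pow_add]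
  have hjlt : i / q ^ M < q ^ (v' + 1) := by
    rw [Nat.div_lt_iff_lt_mul (Nat.pow_pos hq0), ← pow_add]
    calc i < q ^ m := him'
      _ = q ^ (v' + 1 + M) := by congr 1; omega
  have hjc : i / q ^ M = c := by
    rw [← sum_digits_eq q hq (v' + 1) (i / q ^ M) hjlt, Finset.sum_range_succ]
    have hA : ∑ x ∈ Finset.range v', i / q ^ M / q ^ x % q * q ^ x
        = ∑ k ∈ Finset.Icc 1 v', a k * q ^ (k - 1) := by
      rw [sum_Icc_one (fun k => a k * q ^ (k - 1))]
      apply Finset.sum_congr rfl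
      intro t ht
      simp only [Finset.mem_range] at ht
      have hk : (1 + t) ∈ Finset.Icc 1 v' := by simp [Finset.mem_Icc]; omega
      have hx := hik (1 + t) hk
      rw [dig] at hx
      rw [hdd t]
      have he : m - (v' + 1) + (1 + t) - 1 = M + t := by omega
      rw [he] at hx
      rw [hx]
      congr 2
      omega
    have hB : i / q ^ M / q ^ v' % q * q ^ v' = am * q ^ v' := by
      rw [hdd v']
      rw [dig] at him
      have he : m - 1 = M + v' := by omega
      rw [he] at him
      rw [him]
    rw [hA, hB, hc]
    omega
  -- decomposition
  set r := i % q ^ M with hrdef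
  have hdecomp : i = c * q ^ M + r := by
    conv_lhs => rw [← Nat.div_add_mod i (q ^ M)]
    rw [hjc, mul_comm]
  have hrlt : r < q ^ u := by omega
  -- digits of i in low positions come from r
  have hdigr : ∀ e : ℕ, e + 1 ≤ M → i / q ^ e = c * q ^ (M - e) + r / q ^ e := by
    intro e he
    have hsplit : i = r + q ^ e * (c * q ^ (M - e)) := by
      rw [hdecomp]
      have h : q ^ e * (c * q ^ (M - e)) = c * q ^ M := by
        rw [show q ^ M = q ^ e * q ^ (M - e) by rw [← pow_add]; congr 1; omega]
        ring
      omega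
    rw [hsplit, Nat.add_mul_div_left _ _ (Nat.pow_pos hq0)]
    omega
  refine ⟨?_, ?_, ?_⟩
  · -- Part 1
    intro s hs1 hs2
    rw [dig]
    have he : s - 1 + 1 ≤ M := by omega
    rw [hdigr (s - 1) he]
    have h0 : r / q ^ (s - 1) = 0 :=
      Nat.div_eq_of_lt (lt_of_lt_of_le hrlt (Nat.pow_le_pow_right hq0 (by omega)))
    rw [h0, add_zero]
    have h : M - (s - 1) = (M - s) + 1 := by omega
    rw [h, pow_succ, ← mul_assoc]
    exact Nat.mul_mod_left _ _
  · -- Part 2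
    have h1 : 1 ≤ q ^ u := Nat.one_le_pow _ _ hq0
    omega
  · -- Part 3
    intro k' hk1 hk2 t ht
    obtain ⟨e, rfl⟩ : ∃ e, k' = e + 1 := ⟨k' - 1, by omega⟩
    have heM : e + 1 ≤ M := by omega
    set d := dig q i (e + 1) with hd
    have hd' : d = r / q ^ e % q := by
      rw [hd, dig, Nat.add_sub_cancel, hdigr e heM]
      have h : M - e = (M - e - 1) + 1 := by omega
      rw [h, pow_succ, ← mul_assoc, Nat.add_comm, Nat.add_mul_mod_self_right]
    have hdle : d * q ^ e ≤ r := by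
      rw [hd']
      calc r / q ^ e % q * q ^ e ≤ r / q ^ e * q ^ e :=
            Nat.mul_le_mul_right _ (Nat.mod_le _ _)
        _ ≤ r := Nat.div_mul_le_self _ _
    set d2 := (d + t) % q with hd2
    have hd2lt : d2 < q := Nat.mod_lt _ hq0
    set r' := r - d * q ^ e + d2 * q ^ e with hr'
    have hmod : modifyDigit q i (e + 1) t = c * q ^ M + r' := by
      rw [modifyDigit, Nat.add_sub_cancel, ← hd, ← hd2, hr']
      omega
    -- r' < q ^ u
    have hr'lt : r' < q ^ u := by
      have hsplit : r = r / q ^ (e + 1) * q ^ (e + 1) + d * q ^ e + r % q ^ e := by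
        have h1 : r / q ^ e * q ^ e + r % q ^ e = r := Nat.div_add_mod' r (q ^ e)
        have h2 : r / q ^ e = r / q ^ (e + 1) * q + d := by
          rw [hd']
          have h3 := Nat.div_add_mod' (r / q ^ e) q
          rw [Nat.div_div_eq_div_mul, ← pow_succ] at h3
          omega
        calc r = r / q ^ e * q ^ e + r % q ^ e := h1.symm
          _ = (r / q ^ (e + 1) * q + d) * q ^ e + r % q ^ e := by rw [← h2]
          _ = r / q ^ (e + 1) * q ^ (e + 1) + d * q ^ e + r % q ^ e := by ring
      have hmodlt : r % q ^ e < q ^ e := Nat.mod_lt _ (Nat.pow_pos hq0)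
      have hHlt : r / q ^ (e + 1) < q ^ (u - (e + 1)) := by
        rw [Nat.div_lt_iff_lt_mul (Nat.pow_pos hq0), ← pow_add]
        calc r < q ^ u := hrlt
          _ = q ^ (u - (e + 1) + (e + 1)) := by congr 1; omega
      have hstep : (r / q ^ (e + 1) + 1) * q ^ (e + 1) ≤ q ^ u := by
        calc (r / q ^ (e + 1) + 1) * q ^ (e + 1)
            ≤ q ^ (u - (e + 1)) * q ^ (e + 1) := Nat.mul_le_mul_right _ (by omega)
          _ = q ^ u := by rw [← pow_add]; congr 1; omega
      have hd2' : d2 * q ^ e ≤ (q - 1) * q ^ e := Nat.mul_le_mul_right _ (by omega)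
      have hq1 : (q - 1) * q ^ e + q ^ e = q ^ (e + 1) := by
        rw [pow_succ, pow_mul_q q hq e]
        omega
      calc r' = r / q ^ (e + 1) * q ^ (e + 1) + r % q ^ e + d2 * q ^ e := by omega
        _ < r / q ^ (e + 1) * q ^ (e + 1) + q ^ e + (q - 1) * q ^ e := by omega
        _ = (r / q ^ (e + 1) + 1) * q ^ (e + 1) := by rw [← hq1]; ring
        _ ≤ q ^ u := hstep
    calc modifyDigit q i (e + 1) t = c * q ^ M + r' := hmod
      _ < c * q ^ M + q ^ u := by omega
      _ = am * q ^ (m - 1) + S + q ^ u := by rw [hBeq]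
end

section
/- For an (M, N, L)-mutually orthogonal complementary set of unimodular complex sequences, the set size satisfies M ≤ N. -/
open Finset

/-- Aperiodic cross-correlation of two length-`L` complex sequences at integer shift `τ`. -/
noncomputable def acorr (L : ℕ) (a b : ℕ → ℂ) (τ : ℤ) : ℂ :=
  if 0 ≤ τ then ∑ i ∈ Finset.range (L - τ.toNat), a i * (starRingEnd ℂ) (b (i + τ.toNat))
  else ∑ i ∈ Finset.range (L - (-τ).toNat), a (i + (-τ).toNat) * (starRingEnd ℂ) (b i)

lemma acorr_nonneg (L : ℕ) (f g : ℕ → ℂ) (d : ℕ) :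
    acorr L f g (d : ℤ) = ∑ i ∈ range (L - d), f i * (starRingEnd ℂ) (g (i + d)) := by
  simp [acorr]

lemma acorr_neg (L : ℕ) (f g : ℕ → ℂ) (d : ℕ) (hd : 1 ≤ d) :
    acorr L f g (-(d : ℤ)) = ∑ i ∈ range (L - d), f (i + d) * (starRingEnd ℂ) (g i) := by
  rw [acorr, if_neg (by omega)]
  simp

lemma key (L : ℕ) (f g : ℕ → ℂ) :
    (∑ l ∈ range L, f l) * (starRingEnd ℂ) (∑ l ∈ range L, g l)
      = (∑ d ∈ range L, acorr L f g (d : ℤ)) + ∑ d ∈ Ico 1 L, acorr L f g (-(d : ℤ)) := by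
  rw [map_sum, Finset.sum_mul_sum]
  rw [← Finset.sum_product']
  rw [← Finset.sum_filter_add_sum_filter_not (range L ×ˢ range L) (fun p => p.1 ≤ p.2)]
  congr 1
  · rw [Finset.sum_congr rfl (fun d _ => acorr_nonneg L f g d), Finset.sum_sigma']
    refine Finset.sum_nbij' (fun p => ⟨p.2 - p.1, p.1⟩) (fun q => (q.2, q.2 + q.1)) ?_ ?_ ?_ ?_ ?_
    · rintro ⟨x, y⟩ hp
      simp only [mem_filter, mem_product, mem_range] at hp
      simp only [mem_sigma, mem_range]
      omega
    · rintro ⟨d, i⟩ hq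
      simp only [mem_sigma, mem_range] at hq
      simp only [mem_filter, mem_product, mem_range]
      omega
    · rintro ⟨x, y⟩ hp
      simp only [mem_filter, mem_product, mem_range] at hp
      dsimp only
      have h : x + (y - x) = y := by omega
      rw [h]
    · rintro ⟨d, i⟩ hq
      simp only [mem_sigma, mem_range] at hq
      dsimp only
      rw [Nat.add_sub_cancel_left]
    · rintro ⟨x, y⟩ hp
      simp only [mem_filter, mem_product, mem_range] at hp
      dsimp only
      have h : x + (y - x) = y := by omega
      rw [h]
  · rw [Finset.sum_congr rfl (fun d hd => acorr_neg L f g d (mem_Ico.mp hd).1), Finset.sum_sigma']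
    refine Finset.sum_nbij' (fun p => ⟨p.1 - p.2, p.2⟩) (fun q => (q.2 + q.1, q.2)) ?_ ?_ ?_ ?_ ?_
    · rintro ⟨x, y⟩ hp
      simp only [mem_filter, mem_product, mem_range, not_le] at hp
      simp only [mem_sigma, mem_range, mem_Ico]
      omega
    · rintro ⟨d, i⟩ hq
      simp only [mem_sigma, mem_range, mem_Ico] at hq
      simp only [mem_filter, mem_product, mem_range, not_le]
      omega
    · rintro ⟨x, y⟩ hp
      simp only [mem_filter, mem_product, mem_range, not_le] at hp
      dsimp only
      have h : y + (x - y) = x := by omega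
      rw [h]
    · rintro ⟨d, i⟩ hq
      simp only [mem_sigma, mem_range, mem_Ico] at hq
      dsimp only
      rw [Nat.add_sub_cancel_left]
    · rintro ⟨x, y⟩ hp
      simp only [mem_filter, mem_product, mem_range, not_le] at hp
      dsimp only
      have h : y + (x - y) = x := by omega
      rw [h]

/-- For an `(M,N,L)`-MOCS of unimodular sequences, the set size satisfies `M ≤ N`. -/
theorem stmt15 (M N L : ℕ) (hM : 1 ≤ M) (hN : 1 ≤ N) (hL : 1 ≤ L)
    (a : ℕ → ℕ → ℕ → ℂ)
    (hunimod : ∀ i < M, ∀ k < N, ∀ l < L, ‖a i k l‖ = 1)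
    (hauto : ∀ i < M, ∀ τ : ℤ, τ ≠ 0 →
      ∑ k ∈ Finset.range N, acorr L (a i k) (a i k) τ = 0)
    (hcross : ∀ i < M, ∀ j < M, i ≠ j → ∀ τ : ℤ, |τ| ≤ (L : ℤ) - 1 →
      ∑ k ∈ Finset.range N, acorr L (a i k) (a j k) τ = 0) :
    M ≤ N := by
  classical
  let v : Fin M → EuclideanSpace ℂ (Fin N) := fun i => WithLp.toLp 2 (fun k => ∑ l ∈ range L, a i (k : ℕ) l)
  have hinner : ∀ i j : Fin M, (inner ℂ (v i) (v j) : ℂ) =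
      (∑ d ∈ range L, ∑ k ∈ range N, acorr L (a j k) (a i k) (d : ℤ))
        + ∑ d ∈ Ico 1 L, ∑ k ∈ range N, acorr L (a j k) (a i k) (-(d : ℤ)) := by
    intro i j
    have h1 : (inner ℂ (v i) (v j) : ℂ) = ∑ k ∈ range N,
        ((∑ l ∈ range L, a j k l) * (starRingEnd ℂ) (∑ l ∈ range L, a i k l)) := by
      rw [PiLp.inner_apply, ← Fin.sum_univ_eq_sum_range]
      apply Finset.sum_congr rfl
      intro k _
      simp [v, RCLike.inner_apply, mul_comm]
    rw [h1, Finset.sum_congr rfl (fun k _ => key L (a j k) (a i k)),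
      Finset.sum_add_distrib]
    congr 1 <;> exact Finset.sum_comm
  have horth : ∀ i j : Fin M, i ≠ j → (inner ℂ (v i) (v j) : ℂ) = 0 := by
    intro i j hij
    rw [hinner i j]
    have hne : (j : ℕ) ≠ (i : ℕ) := fun h => hij (Fin.ext h.symm)
    rw [Finset.sum_eq_zero, Finset.sum_eq_zero, add_zero]
    · intro d hd
      rw [mem_Ico] at hd
      exact hcross j j.isLt i i.isLt hne _ (by rw [abs_neg, Int.abs_natCast]; omega)
    · intro d hd
      rw [mem_range] at hd
      exact hcross j j.isLt i i.isLt hne _ (by rw [Int.abs_natCast]; omega)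
  have hself : ∀ i : Fin M, (inner ℂ (v i) (v i) : ℂ) = (N : ℂ) * (L : ℂ) := by
    intro i
    rw [hinner i i]
    have h2 : ∑ d ∈ Ico 1 L, ∑ k ∈ range N, acorr L (a i k) (a i k) (-(d : ℤ)) = 0 := by
      apply Finset.sum_eq_zero
      intro d hd
      rw [mem_Ico] at hd
      exact hauto i i.isLt _ (by omega)
    rw [h2, add_zero]
    rw [Finset.sum_eq_single_of_mem 0 (mem_range.mpr hL) (fun d _ hd0 =>
      hauto i i.isLt _ (by exact_mod_cast hd0))]
    have : ∀ k ∈ range N, acorr L (a i k) (a i k) ((0 : ℕ) : ℤ)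
        = (L : ℂ) := by
      intro k hk
      rw [acorr_nonneg]
      have : ∀ l ∈ range L, a i k l * (starRingEnd ℂ) (a i k (l + 0)) = 1 := by
        intro l hl
        rw [Nat.add_zero, Complex.mul_conj, Complex.normSq_eq_norm_sq,
          hunimod i i.isLt k (mem_range.mp hk) l (mem_range.mp hl)]
        norm_num
      rw [Nat.sub_zero, Finset.sum_congr rfl this]
      simp
    rw [Finset.sum_congr rfl this]
    simp [mul_comm]
  have hnz : ∀ i : Fin M, v i ≠ 0 := by
    intro i h0
    have := hself i
    rw [h0, inner_zero_left] at this
    have hNL : ((N : ℂ) * (L : ℂ)) ≠ 0 := by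
      apply mul_ne_zero <;> exact_mod_cast by omega
    exact hNL this.symm
  have hli : LinearIndependent ℂ v :=
    linearIndependent_of_ne_zero_of_inner_eq_zero hnz (fun i j hij => horth i j hij)
  have hcard := hli.fintype_card_le_finrank
  simpa using hcard
end
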